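/- Let k < l be natural numbers with 1 ≤ k and gcd(k,l) = 1. Every complex root z of the polynomial χ(x) = 2x^l + x^{l-k} + 1 satisfies |z| < 1, except possibly z = -1, and z = -1 is a root only in the case where both k and l are odd. -/

import Mathlib

theorem stmt4 (k l : ℕ) (hk : 1 ≤ k) (hkl : k < l) (hgcd : Nat.gcd k l = 1) :
    (∀ z : ℂ, 2 * z ^ l + z ^ (l - k) + 1 = 0 → z = -1 ∨ ‖z‖ < 1) ∧
    ((2 * (-1 : ℂ) ^ l + (-1 : ℂ) ^ (l - k) + 1 = 0) → Odd k ∧ Odd l) := by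
  constructor
  · intro z h
    by_cases hlt : ‖z‖ < 1
    · exact Or.inr hlt
    left
    push_neg at hlt
    set r := ‖z‖ with hr
    -- 2 r^l ≤ r^(l-k) + 1
    have h2 : (2 : ℂ) * z ^ l = -(z ^ (l - k) + 1) := by linear_combination h
    have habs0 : ‖z ^ (l - k) + 1‖ = 2 * r ^ l := by
      rw [← norm_neg, ← h2, norm_mul, norm_pow, ← hr]; norm_num
    have habs : 2 * r ^ l ≤ r ^ (l - k) + 1 := by
      calc 2 * r ^ l = ‖z ^ (l - k) + 1‖ := habs0.symm
        _ ≤ ‖z ^ (l - k)‖ + ‖(1:ℂ)‖ := norm_add_le _ _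
        _ = r ^ (l - k) + 1 := by simp [norm_pow, ← hr]
    have hrl1 : (1:ℝ) ≤ r ^ l := one_le_pow₀ hlt
    have hrlk : r ^ (l - k) ≤ r ^ l := pow_le_pow_right₀ hlt (Nat.sub_le l k)
    have hrleq : r ^ l = 1 := le_antisymm (by nlinarith) hrl1
    have hr1 : r = 1 := by
      by_contra hne
      have : 1 < r := lt_of_le_of_ne hlt (Ne.symm hne)
      have := one_lt_pow₀ this (by omega : l ≠ 0)
      linarith
    have hrlk1 : r ^ (l - k) = 1 := by rw [hr1]; simp
    have habs2 : ‖z ^ (l - k) + 1‖ = 2 := by rw [habs0, hrleq]; norm_num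
    set w := z ^ (l - k) with hw
    have hwabs : ‖w‖ = 1 := by rw [hw, norm_pow, ← hr, hrlk1]
    have hw1 : w = 1 := by
      have hn : Complex.normSq (w + 1) = 4 := by
        rw [← Complex.sq_norm, hw, habs2]; norm_num
      have hns : Complex.normSq w = 1 := by
        rw [← Complex.sq_norm, hwabs]; norm_num
      have hre : w.re = 1 := by
        have e1 : Complex.normSq (w + 1) = Complex.normSq w + 2 * w.re + 1 := by
          simp [Complex.normSq_apply, Complex.add_re, Complex.add_im]; ring
        rw [e1, hns] at hn; linarith
      have him : w.im = 0 := by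
        have : w.re ^ 2 + w.im ^ 2 = 1 := by
          rw [← hns]; simp [Complex.normSq_apply]; ring
        nlinarith
      exact Complex.ext (by simp [hre]) (by simp [him])
    have hzl : z ^ l = -1 := by
      linear_combination h / 2 - hw1 / 2
    have hzk : z ^ k = -1 := by
      have hsplit : z ^ l = z ^ k * z ^ (l - k) := by
        rw [← pow_add]; congr 1; omega
      rw [← hw, hw1, mul_one] at hsplit
      rw [← hsplit, hzl]
    have h2k : z ^ (2 * k) = 1 := by
      rw [mul_comm, pow_mul, hzk]; norm_num
    have h2l : z ^ (2 * l) = 1 := by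
      rw [mul_comm, pow_mul, hzl]; norm_num
    have hg : z ^ Nat.gcd (2 * k) (2 * l) = 1 := pow_gcd_eq_one.mpr ⟨h2k, h2l⟩
    have hg2 : Nat.gcd (2 * k) (2 * l) = 2 := by
      rw [Nat.gcd_mul_left, hgcd]
    rw [hg2] at hg
    rw [sq] at hg
    have : z = 1 ∨ z = -1 := mul_self_eq_one_iff.mp hg
    rcases this with h1 | h1
    · rw [h1, one_pow] at hzl; norm_num at hzl
    · exact h1
  · intro h
    have hl : Odd l := by
      rcases Nat.even_or_odd l with he | ho
      · rw [he.neg_one_pow] at h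
        rcases Nat.even_or_odd (l - k) with he2 | ho2
        · rw [he2.neg_one_pow] at h; norm_num at h
        · rw [ho2.neg_one_pow] at h; norm_num at h
      · exact ho
    have hlk : Even (l - k) := by
      rcases Nat.even_or_odd (l - k) with he | ho
      · exact he
      · rw [hl.neg_one_pow, ho.neg_one_pow] at h; norm_num at h
    refine ⟨?_, hl⟩
    rcases hl with ⟨m, hm⟩
    rcases hlk with ⟨n, hn⟩
    exact ⟨m - n, by omega⟩
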